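/- arXiv:1304.7804 — 2 statements merged into one kernel-verified Lean document; each statement's English description precedes it below -/
import Mathlib

section
/- If α and β are assemblies producible at temperature τ in the hierarchical model, α and β are consistent (they agree on every position in dom α ∩ dom β), and dom α ∩ dom β ≠ ∅, then α → α ∪ β: there is a finite sequence of assemblies α = γ₀, γ₁, …, γ_k = α ∪ β such that for each i < k, γ_{i+1} is the τ-stable union of γ_i with some producible assembly whose domain is disjoint from dom γ_i. In other words, it is possible to assemble exactly α and then assemble the missing portions of β onto α by attachment of producible assemblies. -/
/-- A tile system over a type `T` of tile types: each tile type has, in each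
direction (unit vector of `ℤ × ℤ`), a glue label (a natural number `ℕ`), and
each glue label has a nonnegative integer strength given by `str`. -/
structure TileSystem (T : Type) where
  glue : T → ℤ × ℤ → ℕ
  str : ℕ → ℕ

/-- The four unit-vector directions of `ℤ²`. -/
def dirs : Finset (ℤ × ℤ) := {(0,1), (0,-1), (1,0), (-1,0)}

/-- An assembly: a partial function from `ℤ²` to tile types. -/
abbrev Assembly (T : Type) := ℤ × ℤ → Option T

/-- `D` is the domain of the assembly `α`. -/
def IsDom {T : Type} (α : Assembly T) (D : Finset (ℤ × ℤ)) : Prop :=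
  ∀ p, (α p).isSome ↔ p ∈ D

/-- The strength of the bond between positions `p` and `q` in `α`: it is the
strength of the common glue if `q - p` is a unit direction and the glue of the
tile at `p` in direction `q - p` matches the glue of the tile at `q` in
direction `p - q`; otherwise `0`. -/
def bond {T : Type} (ts : TileSystem T) (α : Assembly T) (p q : ℤ × ℤ) : ℕ :=
  match α p, α q with
  | some t, some t' =>
      if q - p ∈ dirs ∧ ts.glue t (q - p) = ts.glue t' (p - q)
      then ts.str (ts.glue t (q - p)) else 0
  | _, _ => 0

/-- Two positions of `α` interact if they hold tiles binding with positive strength. -/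
def Interacts {T : Type} (ts : TileSystem T) (α : Assembly T) (p q : ℤ × ℤ) : Prop :=
  0 < bond ts α p q

/-- Total strength of the interacting glues between positions in `A` and
(adjacent) positions in `B`. -/
def strengthBetween {T : Type} (ts : TileSystem T) (α : Assembly T)
    (A B : Finset (ℤ × ℤ)) : ℕ :=
  ∑ p ∈ A, ∑ q ∈ B, bond ts α p q

/-- `α` is `τ`-stable: every partition of its domain into two nonempty parts is
crossed by interacting glues of total strength at least `τ`. -/
def Stable {T : Type} (ts : TileSystem T) (α : Assembly T) (τ : ℕ) : Prop :=
  ∀ D A B : Finset (ℤ × ℤ), IsDom α D → A ∪ B = D → Disjoint A B →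
    A.Nonempty → B.Nonempty → τ ≤ strengthBetween ts α A B

/-- The union of two assemblies (agreeing with `α` wherever `α` is defined). -/
def aunion {T : Type} (α β : Assembly T) : Assembly T :=
  fun p => match α p with
    | some t => some t
    | none => β p

/-- Producibility in the hierarchical model at temperature `τ`: an assembly is
producible if it is a single tile, or the `τ`-stable union of two producible
assemblies with disjoint domains. -/
inductive Producible {T : Type} (ts : TileSystem T) (τ : ℕ) : Assembly T → Prop where
  | single (p : ℤ × ℤ) (t : T) :
      Producible ts τ (fun q => if q = p then some t else none)
  | union {α β : Assembly T} :
      Producible ts τ α → Producible ts τ β →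
      (∀ p, α p = none ∨ β p = none) →
      Stable ts (aunion α β) τ →
      Producible ts τ (aunion α β)

/-- Two assemblies are consistent if they agree wherever both are defined. -/
def Consistent {T : Type} (α β : Assembly T) : Prop :=
  ∀ p t t', α p = some t → β p = some t' → t = t'

/-- `α` is a subassembly of `β`. -/
def Subassembly {T : Type} (α β : Assembly T) : Prop :=
  ∀ p t, α p = some t → β p = some t

/-- A producible assembly is terminal if no producible assembly can stably attach to it. -/
def Terminal {T : Type} (ts : TileSystem T) (τ : ℕ) (α : Assembly T) : Prop :=
  ∀ β : Assembly T, Producible ts τ β → (∀ p, α p = none ∨ β p = none) →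
    ¬ Stable ts (aunion α β) τ

/-- The hierarchical system uniquely produces `α` if the set of producible
terminal assemblies equals `{α}`. -/
def UniquelyProduces {T : Type} (ts : TileSystem T) (τ : ℕ) (α : Assembly T) : Prop :=
  {γ : Assembly T | Producible ts τ γ ∧ Terminal ts τ γ} = {α}

/-- `𝒞` is a partition of the finite set `D`: pairwise disjoint nonempty parts
whose union is `D`. -/
def IsPartition (𝒞 : Finset (Finset (ℤ × ℤ))) (D : Finset (ℤ × ℤ)) : Prop :=
  (∀ C ∈ 𝒞, C.Nonempty) ∧
  (∀ C₁ ∈ 𝒞, ∀ C₂ ∈ 𝒞, C₁ ≠ C₂ → Disjoint C₁ C₂) ∧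
  𝒞.sup id = D

/-- One attachment step: `γ'` is the `τ`-stable union of `γ` with some
producible assembly whose domain is disjoint from that of `γ`. -/
def AttachStep {T : Type} (ts : TileSystem T) (τ : ℕ) (γ γ' : Assembly T) : Prop :=
  ∃ δ : Assembly T, Producible ts τ δ ∧ (∀ p, γ p = none ∨ δ p = none) ∧
    Stable ts (aunion γ δ) τ ∧ γ' = aunion γ δ

section Aux
variable {T : Type} (ts : TileSystem T)

lemma aunion_some {α β : Assembly T} {p : ℤ × ℤ} {t : T} (h : α p = some t) :
    aunion α β p = some t := by simp [aunion, h]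

lemma aunion_none {α β : Assembly T} {p : ℤ × ℤ} (h : α p = none) :
    aunion α β p = β p := by simp [aunion, h]

lemma aunion_isSome (α β : Assembly T) (p : ℤ × ℤ) :
    (aunion α β p).isSome ↔ (α p).isSome ∨ (β p).isSome := by
  cases h : α p with
  | some t => simp [aunion_some h, h]
  | none => simp [aunion_none h, h]

lemma aunion_assoc (α β γ : Assembly T) :
    aunion (aunion α β) γ = aunion α (aunion β γ) := by
  funext p
  cases hα : α p with
  | some t => rw [aunion_some (aunion_some hα), aunion_some hα]
  | none =>
    cases hβ : β p with
    | some t =>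
      have h1 : aunion α β p = some t := by rw [aunion_none hα, hβ]
      rw [aunion_some h1, aunion_none hα, aunion_some hβ]
    | none =>
      have h1 : aunion α β p = none := by rw [aunion_none hα, hβ]
      rw [aunion_none h1, aunion_none hα, aunion_none hβ]

lemma aunion_eq_cases {T : Type} (α β : Assembly T) (p : ℤ × ℤ) :
    aunion α β p = α p ∨ (α p = none ∧ aunion α β p = β p) := by
  cases h : α p with
  | none => exact Or.inr ⟨rfl, aunion_none h⟩
  | some t => exact Or.inl (aunion_some h)

lemma aunion_comm_of_disjoint {α β : Assembly T}
    (h : ∀ p, α p = none ∨ β p = none) : aunion α β = aunion β α := by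
  funext p
  rcases h p with h1 | h1
  · rw [aunion_none h1]
    cases hβ : β p with
    | some t => rw [aunion_some hβ]
    | none => rw [aunion_none hβ, h1]
  · rw [aunion_none h1]
    cases hα : α p with
    | some t => rw [aunion_some hα]
    | none => rw [aunion_none hα, h1]

lemma subassembly_aunion_left (α β : Assembly T) : Subassembly α (aunion α β) :=
  fun _ _ h => aunion_some h

lemma subassembly_aunion_right {α β : Assembly T} (h : Consistent α β) :
    Subassembly β (aunion α β) := by
  intro p t hβ
  cases hα : α p with
  | none => rw [aunion_none hα, hβ]
  | some t' => rw [aunion_some hα, h p t' t hα hβ]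

lemma aunion_absorb {α β γ : Assembly T} (h : Subassembly β γ) :
    aunion γ (aunion β α) = aunion γ α := by
  funext p
  cases hγ : γ p with
  | some t => rw [aunion_some hγ, aunion_some hγ]
  | none =>
    rw [aunion_none hγ, aunion_none hγ]
    cases hβ : β p with
    | some t => exact absurd (h p t hβ) (by simp [hγ])
    | none => rw [aunion_none hβ]

lemma aunion_idem_left {T : Type} (α β : Assembly T) :
    aunion α (aunion α β) = aunion α β := aunion_absorb (fun _ _ h => h)

lemma isDom_unique {α : Assembly T} {D D' : Finset (ℤ × ℤ)}
    (h : IsDom α D) (h' : IsDom α D') : D = D' := by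
  ext p; rw [← h p, h' p]

lemma isDom_aunion {α β : Assembly T} {Dα Dβ : Finset (ℤ × ℤ)}
    (hα : IsDom α Dα) (hβ : IsDom β Dβ) : IsDom (aunion α β) (Dα ∪ Dβ) := by
  intro p
  rw [aunion_isSome, hα p, hβ p, Finset.mem_union]

lemma bond_mono {α γ : Assembly T} (h : Subassembly α γ) (p q : ℤ × ℤ) :
    bond ts α p q ≤ bond ts γ p q := by
  cases hp : α p with
  | none => simp [bond, hp]
  | some t =>
    cases hq : α q with
    | none => simp [bond, hp, hq]
    | some t' => rw [bond, bond, hp, hq, h p t hp, h q t' hq]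

lemma strengthBetween_mono {α γ : Assembly T} (h : Subassembly α γ)
    {A₁ B₁ A B : Finset (ℤ × ℤ)} (hA : A₁ ⊆ A) (hB : B₁ ⊆ B) :
    strengthBetween ts α A₁ B₁ ≤ strengthBetween ts γ A B := by
  unfold strengthBetween
  calc ∑ p ∈ A₁, ∑ q ∈ B₁, bond ts α p q
      ≤ ∑ p ∈ A₁, ∑ q ∈ B₁, bond ts γ p q :=
        Finset.sum_le_sum (fun p _ => Finset.sum_le_sum (fun q _ => bond_mono ts h p q))
    _ ≤ ∑ p ∈ A₁, ∑ q ∈ B, bond ts γ p q :=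
        Finset.sum_le_sum (fun p _ => Finset.sum_le_sum_of_subset hB)
    _ ≤ ∑ p ∈ A, ∑ q ∈ B, bond ts γ p q := Finset.sum_le_sum_of_subset hA

lemma producible_dom {τ : ℕ} {α : Assembly T} (h : Producible ts τ α) :
    ∃ D, IsDom α D := by
  induction h with
  | single p t => exact ⟨{p}, fun q => by by_cases hq : q = p <;> simp [hq]⟩
  | union h1 h2 hd hs ih1 ih2 =>
    obtain ⟨D1, hD1⟩ := ih1; obtain ⟨D2, hD2⟩ := ih2
    exact ⟨D1 ∪ D2, isDom_aunion hD1 hD2⟩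

lemma producible_stable {τ : ℕ} {α : Assembly T} (h : Producible ts τ α) :
    Stable ts α τ := by
  induction h with
  | single p t =>
    intro D A B hD hUn hdisj hA hB
    have hDp : D = {p} := by
      ext q; rw [← hD q]; by_cases hq : q = p <;> simp [hq]
    subst hDp
    obtain ⟨a, ha⟩ := hA; obtain ⟨b, hb⟩ := hB
    have haD : a ∈ A ∪ B := Finset.mem_union_left _ ha
    have hbD : b ∈ A ∪ B := Finset.mem_union_right _ hb
    rw [hUn, Finset.mem_singleton] at haD hbD
    subst haD; subst hbD
    exact absurd hb (Finset.disjoint_left.mp hdisj ha)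
  | union h1 h2 hd hs ih1 ih2 => exact hs

/-- The τ-stable union of two τ-stable consistent overlapping assemblies is τ-stable. -/
lemma stable_union {τ : ℕ} {α β : Assembly T} {Dα Dβ : Finset (ℤ × ℤ)}
    (hα : Stable ts α τ) (hβ : Stable ts β τ)
    (hDα : IsDom α Dα) (hDβ : IsDom β Dβ)
    (hcons : Consistent α β) (hover : ∃ p, (α p).isSome ∧ (β p).isSome) :
    Stable ts (aunion α β) τ := by
  intro D A B hD hUn hdisj hA hB
  obtain ⟨p₀, hp₀α, hp₀β⟩ := hover
  have hDeq : D = Dα ∪ Dβ := isDom_unique hD (isDom_aunion hDα hDβ)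
  have hsubα : Subassembly α (aunion α β) := subassembly_aunion_left α β
  have hsubβ : Subassembly β (aunion α β) := subassembly_aunion_right hcons
  have hp₀A : p₀ ∈ A ∪ B := by
    rw [hUn, hDeq, Finset.mem_union]; exact Or.inl ((hDα p₀).1 hp₀α)
  by_cases hAα : (A ∩ Dα).Nonempty
  · by_cases hBα : (B ∩ Dα).Nonempty
    · -- cut within α
      refine le_trans (hα Dα (A ∩ Dα) (B ∩ Dα) hDα ?_ ?_ hAα hBα)
        (strengthBetween_mono ts hsubα Finset.inter_subset_left Finset.inter_subset_left)
      · rw [← Finset.union_inter_distrib_right, hUn, hDeq,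
          Finset.union_inter_distrib_right]
        simp
      · exact hdisj.mono Finset.inter_subset_left Finset.inter_subset_left
    · -- Dα ⊆ A ; cut within β
      have hBβ : B ∩ Dβ = B := by
        apply Finset.inter_eq_left.mpr
        intro b hb
        have hbD : b ∈ Dα ∪ Dβ := by rw [← hDeq, ← hUn]; exact Finset.mem_union_right _ hb
        rcases Finset.mem_union.mp hbD with h | h
        · exact absurd ⟨b, Finset.mem_inter.mpr ⟨hb, h⟩⟩ hBα
        · exact h
      have hp₀A' : p₀ ∈ A := by
        rcases Finset.mem_union.mp hp₀A with h | h
        · exact h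
        · exact absurd ⟨p₀, Finset.mem_inter.mpr ⟨h, (hDα p₀).1 hp₀α⟩⟩ hBα
      refine le_trans (hβ Dβ (A ∩ Dβ) (B ∩ Dβ) hDβ ?_ ?_ ⟨p₀, Finset.mem_inter.mpr ⟨hp₀A', (hDβ p₀).1 hp₀β⟩⟩ (by rw [hBβ]; exact hB))
        (strengthBetween_mono ts hsubβ Finset.inter_subset_left Finset.inter_subset_left)
      · rw [← Finset.union_inter_distrib_right, hUn, hDeq,
          Finset.union_inter_distrib_right]
        simp
      · exact hdisj.mono Finset.inter_subset_left Finset.inter_subset_left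
  · -- Dα ⊆ B ; cut within β
    have hAβ : A ∩ Dβ = A := by
      apply Finset.inter_eq_left.mpr
      intro a ha
      have haD : a ∈ Dα ∪ Dβ := by rw [← hDeq, ← hUn]; exact Finset.mem_union_left _ ha
      rcases Finset.mem_union.mp haD with h | h
      · exact absurd ⟨a, Finset.mem_inter.mpr ⟨ha, h⟩⟩ hAα
      · exact h
    have hp₀B' : p₀ ∈ B := by
      rcases Finset.mem_union.mp hp₀A with h | h
      · exact absurd ⟨p₀, Finset.mem_inter.mpr ⟨h, (hDα p₀).1 hp₀α⟩⟩ hAα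
      · exact h
    refine le_trans (hβ Dβ (A ∩ Dβ) (B ∩ Dβ) hDβ ?_ ?_ (by rw [hAβ]; exact hA) ⟨p₀, Finset.mem_inter.mpr ⟨hp₀B', (hDβ p₀).1 hp₀β⟩⟩)
      (strengthBetween_mono ts hsubβ Finset.inter_subset_left Finset.inter_subset_left)
    · rw [← Finset.union_inter_distrib_right, hUn, hDeq,
        Finset.union_inter_distrib_right]
      simp
    · exact hdisj.mono Finset.inter_subset_left Finset.inter_subset_left

end Aux

section Main
variable {T : Type} (ts : TileSystem T)

lemma key_step {τ : ℕ} {β₁ β₂ : Assembly T}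
    (h1 : Producible ts τ β₁) (h2 : Producible ts τ β₂)
    (hd : ∀ p, β₁ p = none ∨ β₂ p = none)
    (hs : Stable ts (aunion β₁ β₂) τ)
    (ih1 : ∀ γ : Assembly T, Stable ts γ τ → (∃ D, IsDom γ D) → Consistent γ β₁ →
      (∃ p, (γ p).isSome ∧ (β₁ p).isSome) →
      Relation.ReflTransGen (AttachStep ts τ) γ (aunion γ β₁))
    (ih2 : ∀ γ : Assembly T, Stable ts γ τ → (∃ D, IsDom γ D) → Consistent γ β₂ →
      (∃ p, (γ p).isSome ∧ (β₂ p).isSome) →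
      Relation.ReflTransGen (AttachStep ts τ) γ (aunion γ β₂))
    (γ : Assembly T) (hγs : Stable ts γ τ) (hγD : ∃ D, IsDom γ D)
    (hcons : Consistent γ (aunion β₁ β₂))
    (p : ℤ × ℤ) (hpγ : (γ p).isSome) (hpβ : (β₁ p).isSome) :
    Relation.ReflTransGen (AttachStep ts τ) γ (aunion γ (aunion β₁ β₂)) := by
  obtain ⟨Dγ, hDγ⟩ := hγD
  obtain ⟨D1, hD1⟩ := producible_dom ts h1
  obtain ⟨D2, hD2⟩ := producible_dom ts h2
  have hcons1 : Consistent γ β₁ := fun q s t hq ht => hcons q s t hq (aunion_some ht)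
  have step1 := ih1 γ hγs ⟨Dγ, hDγ⟩ hcons1 ⟨p, hpγ, hpβ⟩
  set γ' := aunion γ β₁ with hγ'
  have hγ's : Stable ts γ' τ :=
    stable_union ts hγs (producible_stable ts h1) hDγ hD1 hcons1 ⟨p, hpγ, hpβ⟩
  have hγ'D : IsDom γ' (Dγ ∪ D1) := isDom_aunion hDγ hD1
  have hsubβ₁ : Subassembly β₁ γ' := subassembly_aunion_right hcons1
  have hconsγ'β : Consistent γ' (aunion β₁ β₂) := by
    intro q s t hq ht
    rcases aunion_eq_cases γ β₁ q with h | ⟨h0, h⟩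
    · exact hcons q s t (by rw [← h]; exact hq) ht
    · have hb : aunion β₁ β₂ q = some s := aunion_some (by rw [← h]; exact hq)
      rw [hb] at ht; exact Option.some.inj ht
  have hcons2 : Consistent γ' β₂ := by
    intro q s t hq ht
    have hb1 : β₁ q = none := (hd q).resolve_right (by simp [ht])
    exact hconsγ'β q s t hq (by rw [aunion_none hb1]; exact ht)
  by_cases hover2 : ∃ q, (γ' q).isSome ∧ (β₂ q).isSome
  · have step2 := ih2 γ' hγ's ⟨_, hγ'D⟩ hcons2 hover2
    rw [hγ', aunion_assoc] at step2
    exact step1.trans step2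
  · have hdisj : ∀ q, γ' q = none ∨ β₂ q = none := by
      intro q
      by_cases h : γ' q = none
      · exact Or.inl h
      · right
        by_contra h2
        exact hover2 ⟨q, Option.ne_none_iff_isSome.mp h, Option.ne_none_iff_isSome.mp h2⟩
    have habsorb : aunion γ' (aunion β₁ β₂) = aunion γ' β₂ := aunion_absorb hsubβ₁
    have hstab2 : Stable ts (aunion γ' β₂) τ := by
      rw [← habsorb]
      exact stable_union ts hγ's hs hγ'D (isDom_aunion hD1 hD2) hconsγ'β
        ⟨p, (aunion_isSome γ β₁ p).mpr (Or.inl hpγ), (aunion_isSome β₁ β₂ p).mpr (Or.inl hpβ)⟩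
    have hstep : AttachStep ts τ γ' (aunion γ' β₂) := ⟨β₂, h2, hdisj, hstab2, rfl⟩
    have heq : aunion γ' β₂ = aunion γ (aunion β₁ β₂) := by
      rw [← habsorb, hγ', aunion_assoc, aunion_idem_left]
    have hRT : Relation.ReflTransGen (AttachStep ts τ) γ' (aunion γ (aunion β₁ β₂)) := by
      rw [← heq]; exact Relation.ReflTransGen.single hstep
    exact step1.trans hRT

lemma key {τ : ℕ} {β : Assembly T} (hβ : Producible ts τ β) :
    ∀ γ : Assembly T, Stable ts γ τ → (∃ D, IsDom γ D) → Consistent γ β →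
    (∃ p, (γ p).isSome ∧ (β p).isSome) →
    Relation.ReflTransGen (AttachStep ts τ) γ (aunion γ β) := by
  induction hβ with
  | single p t =>
    intro γ _ _ _ hover
    obtain ⟨q, hq1, hq2⟩ := hover
    simp only at hq2
    have hqp : q = p := by
      by_cases h : q = p
      · exact h
      · simp [h] at hq2
    subst hqp
    have heq : aunion γ (fun r => if r = q then some t else none) = γ := by
      funext r
      cases hr : γ r with
      | some s => exact aunion_some hr
      | none =>
        rw [aunion_none hr]
        by_cases h : r = q
        · subst h; rw [hr] at hq1; simp at hq1
        · simp [h]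
    rw [heq]
  | @union β₁ β₂ h1 h2 hd hs ih1 ih2 =>
    intro γ hγs hγD hcons hover
    obtain ⟨p, hpγ, hpβ⟩ := hover
    cases hb1 : β₁ p with
    | some t =>
      exact key_step ts h1 h2 hd hs ih1 ih2 γ hγs hγD hcons p hpγ (by simp [hb1])
    | none =>
      have hcomm : aunion β₁ β₂ = aunion β₂ β₁ := aunion_comm_of_disjoint hd
      have hpβ₂ : (β₂ p).isSome := by
        rw [hcomm] at hpβ
        rcases aunion_eq_cases β₂ β₁ p with h | ⟨h0, h⟩
        · rw [← h]; exact hpβ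
        · rw [h, hb1] at hpβ; simp at hpβ
      have hd' : ∀ q, β₂ q = none ∨ β₁ q = none := fun q => (hd q).symm
      have hs' : Stable ts (aunion β₂ β₁) τ := by rw [← hcomm]; exact hs
      have hcons' : Consistent γ (aunion β₂ β₁) := by rw [← hcomm]; exact hcons
      have := key_step ts h2 h1 hd' hs' ih2 ih1 γ hγs hγD hcons' p hpγ hpβ₂
      rw [hcomm]
      exact this

end Main


/-- If `α` and `β` are producible at temperature `τ` in the
hierarchical model, consistent, and have overlapping domains, then `α → α ∪ β`:
there is a finite sequence of assemblies starting at `α` and ending at `α ∪ β`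
in which each assembly is obtained from the previous one by the `τ`-stable
attachment of a producible assembly. -/
theorem grows_to_union {T : Type} [Fintype T] (ts : TileSystem T)
    (τ : ℕ) (hτ : 0 < τ) (α β : Assembly T)
    (hα : Producible ts τ α) (hβ : Producible ts τ β)
    (hcons : Consistent α β)
    (hover : ∃ p, (α p).isSome ∧ (β p).isSome) :
    Relation.ReflTransGen (AttachStep ts τ) α (aunion α β) := by
  exact key ts hβ α (producible_stable ts hα) (producible_dom ts hα) hcons hover
end

section
/- Let α and β be assemblies with dom α ∩ dom β ≠ ∅, and let (A, B) be any partition of dom α ∪ dom β into two nonempty parts. Then either both A ∩ dom α and B ∩ dom α are nonempty, or both A ∩ dom β and B ∩ dom β are nonempty; consequently, if α and β are consistent and both τ-stable, the interacting edges of α ∪ β crossing (A, B) have total strength at least τ. -/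
lemma bond_congr {T : Type} (ts : TileSystem T) (γ δ : Assembly T) (p q : ℤ × ℤ)
    (hp : δ p = γ p) (hq : δ q = γ q) : bond ts δ p q = bond ts γ p q := by
  unfold bond; rw [hp, hq]

lemma cut_strength_aux {T : Type} (ts : TileSystem T) (τ : ℕ) (γ δ : Assembly T)
    (D A B : Finset (ℤ × ℤ)) (hD : IsDom γ D)
    (hagree : ∀ p ∈ D, δ p = γ p)
    (hst : Stable ts γ τ)
    (hsub : D ⊆ A ∪ B) (hdisj : Disjoint A B)
    (hA : (A ∩ D).Nonempty) (hB : (B ∩ D).Nonempty) :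
    τ ≤ strengthBetween ts δ A B := by
  have h1 : (A ∩ D) ∪ (B ∩ D) = D := by
    rw [← Finset.union_inter_distrib_right]
    exact Finset.inter_eq_right.mpr hsub
  have h2 : Disjoint (A ∩ D) (B ∩ D) :=
    hdisj.mono Finset.inter_subset_left Finset.inter_subset_left
  have hmain := hst D (A ∩ D) (B ∩ D) hD h1 h2 hA hB
  refine le_trans hmain ?_
  unfold strengthBetween at *
  have heq : ∑ p ∈ A ∩ D, ∑ q ∈ B ∩ D, bond ts γ p q
      = ∑ p ∈ A ∩ D, ∑ q ∈ B ∩ D, bond ts δ p q := by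
    refine Finset.sum_congr rfl fun p hp => Finset.sum_congr rfl fun q hq => ?_
    exact (bond_congr ts γ δ p q
      (hagree p (Finset.mem_inter.mp hp).2) (hagree q (Finset.mem_inter.mp hq).2)).symm
  rw [heq]
  calc ∑ p ∈ A ∩ D, ∑ q ∈ B ∩ D, bond ts δ p q
      ≤ ∑ p ∈ A ∩ D, ∑ q ∈ B, bond ts δ p q := by
        refine Finset.sum_le_sum fun p _ => ?_
        exact Finset.sum_le_sum_of_subset Finset.inter_subset_left
    _ ≤ ∑ p ∈ A, ∑ q ∈ B, bond ts δ p q :=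
        Finset.sum_le_sum_of_subset Finset.inter_subset_left

/-- Let `α`, `β` be assemblies with overlapping domains and
let `(A, B)` be any partition of `dom α ∪ dom β` into two nonempty parts.  Then
either both `A ∩ dom α` and `B ∩ dom α` are nonempty, or both `A ∩ dom β` and
`B ∩ dom β` are nonempty; consequently, if `α` and `β` are consistent and both
`τ`-stable, the interacting edges of `α ∪ β` crossing `(A, B)` have total
strength at least `τ`. -/
theorem union_cut_strength {T : Type} [Fintype T] (ts : TileSystem T)
    (τ : ℕ) (hτ : 0 < τ) (α β : Assembly T)
    (Dα Dβ : Finset (ℤ × ℤ)) (hDα : IsDom α Dα) (hDβ : IsDom β Dβ)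
    (hover : (Dα ∩ Dβ).Nonempty)
    (A B : Finset (ℤ × ℤ)) (hcover : A ∪ B = Dα ∪ Dβ) (hdisj : Disjoint A B)
    (hA : A.Nonempty) (hB : B.Nonempty) :
    (((A ∩ Dα).Nonempty ∧ (B ∩ Dα).Nonempty) ∨
      ((A ∩ Dβ).Nonempty ∧ (B ∩ Dβ).Nonempty)) ∧
    (Consistent α β → Stable ts α τ → Stable ts β τ →
      τ ≤ strengthBetween ts (aunion α β) A B) := by
  obtain ⟨x, hx⟩ := hover
  rw [Finset.mem_inter] at hx
  have hxAB : x ∈ A ∪ B := by rw [hcover]; exact Finset.mem_union_left _ hx.1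
  have part1 : (((A ∩ Dα).Nonempty ∧ (B ∩ Dα).Nonempty) ∨
      ((A ∩ Dβ).Nonempty ∧ (B ∩ Dβ).Nonempty)) := by
    rcases Finset.mem_union.mp hxAB with hxA | hxB
    · obtain ⟨y, hy⟩ := hB
      have hyD : y ∈ Dα ∪ Dβ := by rw [← hcover]; exact Finset.mem_union_right _ hy
      rcases Finset.mem_union.mp hyD with h | h
      · exact Or.inl ⟨⟨x, Finset.mem_inter.mpr ⟨hxA, hx.1⟩⟩,
          ⟨y, Finset.mem_inter.mpr ⟨hy, h⟩⟩⟩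
      · exact Or.inr ⟨⟨x, Finset.mem_inter.mpr ⟨hxA, hx.2⟩⟩,
          ⟨y, Finset.mem_inter.mpr ⟨hy, h⟩⟩⟩
    · obtain ⟨y, hy⟩ := hA
      have hyD : y ∈ Dα ∪ Dβ := by rw [← hcover]; exact Finset.mem_union_left _ hy
      rcases Finset.mem_union.mp hyD with h | h
      · exact Or.inl ⟨⟨y, Finset.mem_inter.mpr ⟨hy, h⟩⟩,
          ⟨x, Finset.mem_inter.mpr ⟨hxB, hx.1⟩⟩⟩
      · exact Or.inr ⟨⟨y, Finset.mem_inter.mpr ⟨hy, h⟩⟩,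
          ⟨x, Finset.mem_inter.mpr ⟨hxB, hx.2⟩⟩⟩
  refine ⟨part1, fun hcons hsα hsβ => ?_⟩
  have hsubα : Dα ⊆ A ∪ B := by rw [hcover]; exact Finset.subset_union_left
  have hsubβ : Dβ ⊆ A ∪ B := by rw [hcover]; exact Finset.subset_union_right
  have hagα : ∀ p ∈ Dα, aunion α β p = α p := by
    intro p hp
    obtain ⟨t, ht⟩ := Option.isSome_iff_exists.mp ((hDα p).mpr hp)
    simp [aunion, ht]
  have hagβ : ∀ p ∈ Dβ, aunion α β p = β p := by
    intro p hp
    obtain ⟨t', ht'⟩ := Option.isSome_iff_exists.mp ((hDβ p).mpr hp)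
    cases hα : α p with
    | none => simp [aunion, hα]
    | some t => simp [aunion, hα, ht', hcons p t t' hα ht']
  rcases part1 with ⟨h1, h2⟩ | ⟨h1, h2⟩
  · exact cut_strength_aux ts τ α (aunion α β) Dα A B hDα hagα hsα hsubα hdisj h1 h2
  · exact cut_strength_aux ts τ β (aunion α β) Dβ A B hDβ hagβ hsβ hsubβ hdisj h1 h2
end
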